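/- Let S and A be nonempty finite types, let P and P̂ be two transition kernels, let π be a policy with induced state transition matrices Q and Q̂ (Q(s'|s) = Σ_{a∈A} π(a|s) P(s'|s,a), Q̂ analogously from P̂), let r be a reward function with 0 ≤ r(s) ≤ r_max for all s, and let γ ∈ [0,1). If there is δ ≥ 0 such that for all s ∈ S and a ∈ A, Σ_{s'∈S} |P(s'|s,a) − P̂(s'|s,a)| ≤ δ, then the value functions of π in the two MDPs satisfy, for every state s ∈ S, | Σ_{t=0}^∞ γ^t Σ_{s'∈S} (Q^t)(s,s') r(s') − Σ_{t=0}^∞ γ^t Σ_{s'∈S} (Q̂^t)(s,s') r(s') | ≤ (γ · r_max / (1−γ)²) · δ. -/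

import Mathlib

/-- If two kernels are within δ in total variation for every state-action pair,
then the value functions of a common policy in the two MDPs differ by at most
γ·r_max·δ/(1-γ)². -/
theorem value_diff_le_of_kernel_tv
    {S A : Type*} [Fintype S] [Fintype A] [DecidableEq S] [Nonempty S] [Nonempty A]
    (P Phat : S → A → S → ℝ)
    (hP0 : ∀ s a s', 0 ≤ P s a s')
    (hP1 : ∀ s a, ∑ s', P s a s' = 1)
    (hPhat0 : ∀ s a s', 0 ≤ Phat s a s')
    (hPhat1 : ∀ s a, ∑ s', Phat s a s' = 1)
    (π : S → A → ℝ)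
    (hπ0 : ∀ s a, 0 ≤ π s a)
    (hπ1 : ∀ s, ∑ a, π s a = 1)
    (Q Qhat : Matrix S S ℝ)
    (hQ : ∀ s s', Q s s' = ∑ a, π s a * P s a s')
    (hQhat : ∀ s s', Qhat s s' = ∑ a, π s a * Phat s a s')
    (r : S → ℝ) (rmax : ℝ)
    (hr : ∀ s, 0 ≤ r s ∧ r s ≤ rmax)
    (γ : ℝ) (hγ0 : 0 ≤ γ) (hγ1 : γ < 1)
    (δ : ℝ) (hδ : 0 ≤ δ)
    (hbound : ∀ s a, ∑ s', |P s a s' - Phat s a s'| ≤ δ) :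
    ∀ s : S,
      |(∑' t : ℕ, γ ^ t * ∑ s', (Q ^ t) s s' * r s')
        - ∑' t : ℕ, γ ^ t * ∑ s', (Qhat ^ t) s s' * r s'|
      ≤ γ * rmax / (1 - γ) ^ 2 * δ := by
  intro s
  have hrmax : 0 ≤ rmax := le_trans (hr (Classical.arbitrary S)).1 (hr _).2
  -- stochasticity of Q and Qhat
  have hQ0 : ∀ s s', 0 ≤ Q s s' := fun s s' => by
    rw [hQ]; exact Finset.sum_nonneg fun a _ => mul_nonneg (hπ0 s a) (hP0 s a s')
  have hQhat0 : ∀ s s', 0 ≤ Qhat s s' := fun s s' => by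
    rw [hQhat]; exact Finset.sum_nonneg fun a _ => mul_nonneg (hπ0 s a) (hPhat0 s a s')
  have hQ1 : ∀ s, ∑ s', Q s s' = 1 := fun s => by
    simp only [hQ]
    rw [Finset.sum_comm]
    simp only [← Finset.mul_sum, hP1, mul_one, hπ1]
  have hQhat1 : ∀ s, ∑ s', Qhat s s' = 1 := fun s => by
    simp only [hQhat]
    rw [Finset.sum_comm]
    simp only [← Finset.mul_sum, hPhat1, mul_one, hπ1]
  -- row L1 bound on Q - Qhat
  have hQd : ∀ s, ∑ s', |Q s s' - Qhat s s'| ≤ δ := fun s => by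
    calc ∑ s', |Q s s' - Qhat s s'|
        = ∑ s', |∑ a, π s a * (P s a s' - Phat s a s')| := by
          simp only [hQ, hQhat, ← Finset.sum_sub_distrib, mul_sub]
      _ ≤ ∑ s', ∑ a, |π s a * (P s a s' - Phat s a s')| :=
          Finset.sum_le_sum fun s' _ => Finset.abs_sum_le_sum_abs _ _
      _ = ∑ a, π s a * ∑ s', |P s a s' - Phat s a s'| := by
          rw [Finset.sum_comm]
          simp only [abs_mul, abs_of_nonneg (hπ0 s _), Finset.mul_sum]
      _ ≤ ∑ a, π s a * δ :=
          Finset.sum_le_sum fun a _ => mul_le_mul_of_nonneg_left (hbound s a) (hπ0 s a)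
      _ = δ := by rw [← Finset.sum_mul, hπ1, one_mul]
  -- the value vectors
  set w : ℕ → S → ℝ := fun t => (Q ^ t).mulVec r with hw
  set v : ℕ → S → ℝ := fun t => (Qhat ^ t).mulVec r with hv
  have hwrec : ∀ t, w (t + 1) = Q.mulVec (w t) := fun t => by
    simp [hw, Matrix.mulVec_mulVec, ← pow_succ']
  have hvrec : ∀ t, v (t + 1) = Qhat.mulVec (v t) := fun t => by
    simp [hv, Matrix.mulVec_mulVec, ← pow_succ']
  -- generic: a stochastic matrix preserves [0, rmax] bounds
  have stoch : ∀ (M : Matrix S S ℝ), (∀ s s', 0 ≤ M s s') → (∀ s, ∑ s', M s s' = 1) →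
      ∀ (u : S → ℝ), (∀ s', 0 ≤ u s' ∧ u s' ≤ rmax) →
      ∀ s, 0 ≤ M.mulVec u s ∧ M.mulVec u s ≤ rmax := by
    intro M hM0 hM1 u hu s
    constructor
    · exact Finset.sum_nonneg fun s' _ => mul_nonneg (hM0 s s') (hu s').1
    · calc M.mulVec u s = ∑ s', M s s' * u s' := rfl
        _ ≤ ∑ s', M s s' * rmax :=
            Finset.sum_le_sum fun s' _ => mul_le_mul_of_nonneg_left (hu s').2 (hM0 s s')
        _ = rmax := by rw [← Finset.sum_mul, hM1, one_mul]
  have hwb : ∀ t s, 0 ≤ w t s ∧ w t s ≤ rmax := by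
    intro t
    induction t with
    | zero => intro s; simpa [hw] using hr s
    | succ t ih => intro s; rw [hwrec]; exact stoch Q hQ0 hQ1 (w t) ih s
  have hvb : ∀ t s, 0 ≤ v t s ∧ v t s ≤ rmax := by
    intro t
    induction t with
    | zero => intro s; simpa [hv] using hr s
    | succ t ih => intro s; rw [hvrec]; exact stoch Qhat hQhat0 hQhat1 (v t) ih s
  -- key difference bound
  have hdiff : ∀ t s, |w t s - v t s| ≤ t * (δ * rmax) := by
    intro t
    induction t with
    | zero => intro s; simp [hw, hv]
    | succ t ih =>
      intro s
      have key : w (t + 1) s - v (t + 1) s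
          = Q.mulVec (fun x => w t x - v t x) s + ((Q - Qhat).mulVec (v t)) s := by
        rw [hwrec, hvrec]
        simp only [Matrix.mulVec, dotProduct, Matrix.sub_apply, sub_mul, mul_sub,
          ← Finset.sum_add_distrib, ← Finset.sum_sub_distrib]
        exact Finset.sum_congr rfl fun x _ => by ring
      rw [key]
      have h1 : |Q.mulVec (fun x => w t x - v t x) s| ≤ t * (δ * rmax) := by
        calc |Q.mulVec (fun x => w t x - v t x) s|
            ≤ ∑ s', |Q s s' * (w t s' - v t s')| := Finset.abs_sum_le_sum_abs _ _
          _ ≤ ∑ s', Q s s' * (t * (δ * rmax)) := by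
              refine Finset.sum_le_sum fun s' _ => ?_
              rw [abs_mul, abs_of_nonneg (hQ0 s s')]
              exact mul_le_mul_of_nonneg_left (ih s') (hQ0 s s')
          _ = t * (δ * rmax) := by rw [← Finset.sum_mul, hQ1, one_mul]
      have h2 : |((Q - Qhat).mulVec (v t)) s| ≤ δ * rmax := by
        calc |((Q - Qhat).mulVec (v t)) s|
            ≤ ∑ s', |(Q s s' - Qhat s s') * v t s'| := by
              simpa [Matrix.mulVec, dotProduct, Matrix.sub_apply] using
                Finset.abs_sum_le_sum_abs (fun s' => (Q s s' - Qhat s s') * v t s') Finset.univ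
          _ ≤ ∑ s', |Q s s' - Qhat s s'| * rmax := by
              refine Finset.sum_le_sum fun s' _ => ?_
              rw [abs_mul]
              have : |v t s'| ≤ rmax := abs_le.mpr ⟨by linarith [(hvb t s').1], (hvb t s').2⟩
              exact mul_le_mul_of_nonneg_left this (abs_nonneg _)
          _ = (∑ s', |Q s s' - Qhat s s'|) * rmax := by rw [Finset.sum_mul]
          _ ≤ δ * rmax := mul_le_mul_of_nonneg_right (hQd s) hrmax
      calc |Q.mulVec (fun x => w t x - v t x) s + ((Q - Qhat).mulVec (v t)) s|
          ≤ |Q.mulVec (fun x => w t x - v t x) s| + |((Q - Qhat).mulVec (v t)) s| :=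
            abs_add_le _ _
        _ ≤ t * (δ * rmax) + δ * rmax := add_le_add h1 h2
        _ = (t + 1 : ℕ) * (δ * rmax) := by push_cast; ring
  -- summability
  have hsumf : Summable (fun t : ℕ => γ ^ t * w t s) := by
    refine Summable.of_norm_bounded
      ((summable_geometric_of_lt_one hγ0 hγ1).mul_left rmax) fun t => ?_
    rw [Real.norm_eq_abs, abs_mul, abs_of_nonneg (pow_nonneg hγ0 t),
      abs_of_nonneg (hwb t s).1, mul_comm]
    exact mul_le_mul_of_nonneg_right (hwb t s).2 (pow_nonneg hγ0 t)
  have hsumg : Summable (fun t : ℕ => γ ^ t * v t s) := by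
    refine Summable.of_norm_bounded
      ((summable_geometric_of_lt_one hγ0 hγ1).mul_left rmax) fun t => ?_
    rw [Real.norm_eq_abs, abs_mul, abs_of_nonneg (pow_nonneg hγ0 t),
      abs_of_nonneg (hvb t s).1, mul_comm]
    exact mul_le_mul_of_nonneg_right (hvb t s).2 (pow_nonneg hγ0 t)
  have hγn : ‖γ‖ < 1 := by rwa [Real.norm_eq_abs, abs_of_nonneg hγ0]
  have hsumb : Summable (fun t : ℕ => δ * rmax * ((t : ℝ) * γ ^ t)) := by
    have := summable_pow_mul_geometric_of_norm_lt_one (R := ℝ) 1 hγn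
    simpa [pow_one] using this.mul_left (δ * rmax)
  have hbnd : ∀ t : ℕ, ‖γ ^ t * w t s - γ ^ t * v t s‖ ≤ δ * rmax * ((t : ℝ) * γ ^ t) := by
    intro t
    rw [← mul_sub, Real.norm_eq_abs, abs_mul, abs_of_nonneg (pow_nonneg hγ0 t)]
    calc γ ^ t * |w t s - v t s| ≤ γ ^ t * ((t : ℝ) * (δ * rmax)) :=
          mul_le_mul_of_nonneg_left (hdiff t s) (pow_nonneg hγ0 t)
      _ = δ * rmax * ((t : ℝ) * γ ^ t) := by ring
  have hsumn : Summable (fun t : ℕ => ‖γ ^ t * w t s - γ ^ t * v t s‖) :=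
    Summable.of_nonneg_of_le (fun t => norm_nonneg _) hbnd hsumb
  have hmain : |∑' t : ℕ, γ ^ t * w t s - ∑' t : ℕ, γ ^ t * v t s|
      ≤ γ * rmax / (1 - γ) ^ 2 * δ := by
    rw [← Summable.tsum_sub hsumf hsumg]
    calc |∑' t : ℕ, (γ ^ t * w t s - γ ^ t * v t s)|
        ≤ ∑' t : ℕ, ‖γ ^ t * w t s - γ ^ t * v t s‖ := norm_tsum_le_tsum_norm hsumn
      _ ≤ ∑' t : ℕ, δ * rmax * ((t : ℝ) * γ ^ t) := Summable.tsum_le_tsum hbnd hsumn hsumb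
      _ = δ * rmax * ∑' t : ℕ, (t : ℝ) * γ ^ t := by rw [tsum_mul_left]
      _ = δ * rmax * (γ / (1 - γ) ^ 2) := by
          rw [tsum_coe_mul_geometric_of_norm_lt_one hγn]
      _ = γ * rmax / (1 - γ) ^ 2 * δ := by ring
  have hww : ∀ t, γ ^ t * ∑ s', (Q ^ t) s s' * r s' = γ ^ t * w t s := fun t => rfl
  have hvv : ∀ t, γ ^ t * ∑ s', (Qhat ^ t) s s' * r s' = γ ^ t * v t s := fun t => rfl
  simpa only [hww, hvv] using hmain
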